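/- Let V, W, G be (abelian group)-valued k-functors with V additive, and let π : W → G be an epimorphism (surjective at every commutative k-algebra B). Then every natural transformation of underlying set-valued functors V → G lifts through π to a natural transformation of underlying set-valued functors V → W; that is, the induced map Mor_{k-functors}(V,W) → Mor_{k-functors}(V,G) is surjective, where Mor_{k-functors} denotes natural transformations of the underlying set-valued functors (not required to be additive). -/

import Mathlib

universe u

open TensorProduct

/-- An (abelian group)-valued `k`-functor: a functor from commutative `k`-algebras
(in universe `u`) to abelian groups. -/
structure AbFunctor (k : Type u) [Field k] : Type (u + 1) where
  obj : ∀ (B : Type u) [CommRing B] [Algebra k B], Type u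
  [grp : ∀ (B : Type u) [CommRing B] [Algebra k B], AddCommGroup (obj B)]
  map : ∀ {B C : Type u} [CommRing B] [Algebra k B] [CommRing C] [Algebra k C],
    (B →ₐ[k] C) → (obj B →+ obj C)
  map_id : ∀ (B : Type u) [CommRing B] [Algebra k B],
    map (AlgHom.id k B) = AddMonoidHom.id (obj B)
  map_comp : ∀ {B C D : Type u} [CommRing B] [Algebra k B] [CommRing C] [Algebra k C]
    [CommRing D] [Algebra k D] (f : B →ₐ[k] C) (g : C →ₐ[k] D),
    map (g.comp f) = (map g).comp (map f)

attribute [instance] AbFunctor.grp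

variable (k : Type u) [Field k]

/-- A morphism of (abelian group)-valued `k`-functors. -/
structure AbHom (F G : AbFunctor k) where
  app : ∀ (B : Type u) [CommRing B] [Algebra k B], F.obj B →+ G.obj B
  naturality : ∀ {B C : Type u} [CommRing B] [Algebra k B] [CommRing C] [Algebra k C]
    (f : B →ₐ[k] C) (x : F.obj B), G.map f (app B x) = app C (F.map f x)

/-- A natural transformation of the underlying set-valued functors
(not required to be additive). -/
structure SetHom (F G : AbFunctor k) where
  app : ∀ (B : Type u) [CommRing B] [Algebra k B], F.obj B → G.obj B
  naturality : ∀ {B C : Type u} [CommRing B] [Algebra k B] [CommRing C] [Algebra k C]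
    (f : B →ₐ[k] C) (x : F.obj B), G.map f (app B x) = app C (F.map f x)

/-- An isomorphism of (abelian group)-valued `k`-functors. -/
structure AbIso (F G : AbFunctor k) where
  hom : AbHom k F G
  inv : AbHom k G F
  hom_inv : ∀ (B : Type u) [CommRing B] [Algebra k B] (x : F.obj B),
    inv.app B (hom.app B x) = x
  inv_hom : ∀ (B : Type u) [CommRing B] [Algebra k B] (x : G.obj B),
    hom.app B (inv.app B x) = x
/-- `𝔾_a^ι`, the direct sum of `ι` copies of the additive group functor,
`B ↦ ⊕_{i : ι} (B, +)`. -/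
noncomputable def Ga (ι : Type u) : AbFunctor k where
  obj B _ _ := ι →₀ B
  grp B _ _ := inferInstance
  map f := Finsupp.mapRange.addMonoidHom f.toRingHom.toAddMonoidHom
  map_id B _ _ := by
    ext x i
    simp [Finsupp.mapRange.addMonoidHom]
  map_comp f g := by
    ext x i j
    simp only [AddMonoidHom.coe_comp, Function.comp_apply, Finsupp.mapRange.addMonoidHom_apply,
      Finsupp.mapRange_apply, Finsupp.singleAddHom_apply]
    by_cases h : x = j <;> simp [h, Finsupp.single_apply]
/-- A functor is strictly additive if it is isomorphic to `𝔾_a^α` for some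
`α ∈ {0, 1, …, ∞}`. -/
def IsStrictlyAdditive (F : AbFunctor k) : Prop :=
  (∃ n : ℕ, Nonempty (AbIso k F (Ga k (ULift.{u} (Fin n))))) ∨
    Nonempty (AbIso k F (Ga k (ULift.{u} ℕ)))
/-- `0 → F' → F → F'' → 0` is a short exact sequence of (abelian group)-valued
`k`-functors (exactness is objectwise). -/
structure IsShortExact {F' F F'' : AbFunctor k} (i : AbHom k F' F)
    (p : AbHom k F F'') : Prop where
  inj : ∀ (B : Type u) [CommRing B] [Algebra k B], Function.Injective (i.app B)
  surj : ∀ (B : Type u) [CommRing B] [Algebra k B], Function.Surjective (p.app B)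
  exact : ∀ (B : Type u) [CommRing B] [Algebra k B] (x : F.obj B),
    p.app B x = 0 ↔ x ∈ Set.range (i.app B)
/-- A functor is additive if it admits a finite filtration with strictly additive
successive quotients; equivalently (and as formalized here), the class of additive
functors is the smallest class containing the strictly additive functors and closed
under extensions with strictly additive quotients. -/
inductive IsAdditive : AbFunctor k → Prop
  | of_strict (F : AbFunctor k) : IsStrictlyAdditive k F → IsAdditive F
  | of_ext {F' F F'' : AbFunctor k} (i : AbHom k F' F) (p : AbHom k F F'') :
      IsShortExact k i p → IsAdditive F' → IsStrictlyAdditive k F'' → IsAdditive F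


namespace AddLiftAux

open MvPolynomial

variable {k : Type u} [Field k]

/-- Composition helper for `AbFunctor.map`. -/
theorem map_map (F : AbFunctor k) {B C D : Type u} [CommRing B] [Algebra k B]
    [CommRing C] [Algebra k C] [CommRing D] [Algebra k D]
    (f : B →ₐ[k] C) (g : C →ₐ[k] D) (x : F.obj B) :
    F.map g (F.map f x) = F.map (g.comp f) x := by
  rw [F.map_comp]; rfl

theorem map_id_apply (F : AbFunctor k) {B : Type u} [CommRing B] [Algebra k B]
    (x : F.obj B) : F.map (AlgHom.id k B) x = x := by
  rw [F.map_id]; rfl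

/-- The product of two abelian-group-valued functors. -/
@[reducible] def ProdF (F G : AbFunctor k) : AbFunctor k where
  obj B _ _ := F.obj B × G.obj B
  grp _ _ _ := inferInstance
  map f := (F.map f).prodMap (G.map f)
  map_id B _ _ := by
    ext x
    · simp [map_id_apply]
    · simp [map_id_apply]
  map_comp f g := by
    ext x
    · simp [map_map]
    · simp [map_map]

/-- The zero functor. -/
@[reducible] def ZeroF : AbFunctor k where
  obj _ _ _ := PUnit
  grp _ _ _ := inferInstance
  map _ := AddMonoidHom.id PUnit
  map_id _ := rfl
  map_comp _ _ := rfl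

theorem mapAlgHom_comp' {B C D : Type u} [CommRing B] [Algebra k B]
    [CommRing C] [Algebra k C] [CommRing D] [Algebra k D]
    (f : B →ₐ[k] C) (g : C →ₐ[k] D) :
    mapAlgHom (σ := ℕ) (g.comp f) = (mapAlgHom g).comp (mapAlgHom f) := by
  apply AlgHom.coe_ringHom_injective
  apply MvPolynomial.ringHom_ext <;> intro a <;> simp [mapAlgHom]

/-- `B ↦ F(B[x_0, x_1, …])`. -/
@[reducible] noncomputable def PolyF (F : AbFunctor k) : AbFunctor k where
  obj B _ _ := F.obj (MvPolynomial ℕ B)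
  grp _ _ _ := inferInstance
  map f := F.map (MvPolynomial.mapAlgHom f)
  map_id B _ _ := by
    show F.map (MvPolynomial.mapAlgHom (AlgHom.id k B)) = _
    rw [MvPolynomial.mapAlgHom_id, F.map_id]
  map_comp {B C D} _ _ _ _ _ _ f g := by
    show F.map (MvPolynomial.mapAlgHom (g.comp f))
      = AddMonoidHom.comp (F.map (MvPolynomial.mapAlgHom g)) (F.map (MvPolynomial.mapAlgHom f))
    rw [mapAlgHom_comp', F.map_comp]

/-- The lifting property. -/
def LiftQ (V : AbFunctor k) : Prop :=
  ∀ (W G : AbFunctor k) (pi : AbHom k W G),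
    (∀ (B : Type u) [CommRing B] [Algebra k B], Function.Surjective (pi.app B)) →
    ∀ t : SetHom k V G, ∃ s : SetHom k V W,
      ∀ (B : Type u) [CommRing B] [Algebra k B] (x : V.obj B),
        pi.app B (s.app B x) = t.app B x

end AddLiftAux

namespace AddLiftAux
open MvPolynomial
variable {k : Type u} [Field k]

/-- Inclusion of constants. -/
noncomputable def incl (B : Type u) [CommRing B] [Algebra k B] :
    B →ₐ[k] MvPolynomial ℕ B :=
  (Algebra.ofId B (MvPolynomial ℕ B)).restrictScalars k

/-- Evaluation at a point. -/
noncomputable def ev {B : Type u} [CommRing B] [Algebra k B] (f : ℕ → B) :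
    MvPolynomial ℕ B →ₐ[k] B :=
  (MvPolynomial.aeval (R := B) f).restrictScalars k

/-- Truncation: kills the variables `x_i`, `i ≥ n`. -/
noncomputable def trunc (B : Type u) [CommRing B] [Algebra k B] (n : ℕ) :
    MvPolynomial ℕ B →ₐ[k] MvPolynomial ℕ B :=
  (MvPolynomial.aeval (R := B)
    (fun i => if i < n then (X i : MvPolynomial ℕ B) else 0)).restrictScalars k

variable {B C : Type u} [CommRing B] [Algebra k B] [CommRing C] [Algebra k C]

@[simp] theorem incl_apply (b : B) : incl (k := k) B b = MvPolynomial.C b := rfl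

@[simp] theorem ev_C (f : ℕ → B) (b : B) : ev (k := k) f (MvPolynomial.C b) = b := by
  simp [ev, MvPolynomial.aeval_C, MvPolynomial.algebraMap_eq]

@[simp] theorem ev_X (f : ℕ → B) (i : ℕ) : ev (k := k) f (X i) = f i := by
  simp [ev]

@[simp] theorem trunc_C (n : ℕ) (b : B) : trunc (k := k) B n (MvPolynomial.C b) = MvPolynomial.C b := by
  simp [trunc, MvPolynomial.aeval_C, MvPolynomial.algebraMap_eq]

@[simp] theorem trunc_X (n i : ℕ) :
    trunc (k := k) B n (X i) = if i < n then (X i : MvPolynomial ℕ B) else 0 := by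
  simp [trunc]

theorem L1 (φ : B →ₐ[k] C) :
    (mapAlgHom (σ := ℕ) φ).comp (incl B) = (incl C).comp φ := by
  apply AlgHom.ext; intro b
  simp [mapAlgHom_apply]

theorem L2 (φ : B →ₐ[k] C) (n : ℕ) :
    (mapAlgHom (σ := ℕ) φ).comp (trunc B n) = (trunc C n).comp (mapAlgHom φ) := by
  apply AlgHom.coe_ringHom_injective
  apply MvPolynomial.ringHom_ext <;> intro a
  · simp [mapAlgHom_apply]
  · by_cases h : a < n <;> simp [mapAlgHom_apply, h]

theorem L3 (φ : B →ₐ[k] C) (f : ℕ → B) :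
    (ev (fun i => φ (f i))).comp (mapAlgHom (σ := ℕ) φ) = φ.comp (ev f) := by
  apply AlgHom.coe_ringHom_injective
  apply MvPolynomial.ringHom_ext <;> intro a <;> simp [mapAlgHom_apply]

theorem L4 {n m : ℕ} (h : n ≤ m) :
    (trunc (k := k) B n).comp (trunc B m) = trunc B n := by
  apply AlgHom.coe_ringHom_injective
  apply MvPolynomial.ringHom_ext <;> intro a
  · simp
  · by_cases h1 : a < m
    · simp [h1]
    · have h2 : ¬ a < n := fun hc => h1 (lt_of_lt_of_le hc h)
      simp [h1, h2]

theorem L5 {f : ℕ → B} {n : ℕ} (hf : ∀ i, n ≤ i → f i = 0) :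
    (ev (k := k) f).comp (trunc B n) = ev f := by
  apply AlgHom.coe_ringHom_injective
  apply MvPolynomial.ringHom_ext <;> intro a
  · simp
  · by_cases h1 : a < n
    · simp [h1]
    · simp [h1, hf a (le_of_not_gt h1)]

theorem L6 (f : ℕ → B) : (ev (k := k) f).comp (incl B) = AlgHom.id k B := by
  apply AlgHom.ext; intro b; simp

theorem L7 (n : ℕ) : (trunc (k := k) B n).comp (incl B) = incl B := by
  apply AlgHom.ext; intro b; simp

end AddLiftAux

namespace AddLiftAux
open MvPolynomial
section NoField
variable {ι : Type u} (j : ι ↪ ℕ) {B : Type u} [CommRing B]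

/-- The generic point at level `n`. -/
noncomputable def gp (B : Type u) [CommRing B] (n : ℕ) :
    ι →₀ MvPolynomial ℕ B :=
  Finsupp.onFinset ((Finset.range n).preimage j j.injective.injOn)
    (fun i => if j i < n then X (j i) else 0)
    (fun i h => by
      rw [Finset.mem_preimage, Finset.mem_range]
      by_contra hc
      exact h (if_neg hc))

theorem gp_apply (n : ℕ) (i : ι) :
    gp j B n i = if j i < n then (X (j i) : MvPolynomial ℕ B) else 0 := rfl

open Classical in
/-- Extension of a finsupp on `ι` to a function on `ℕ` via `j`. -/
noncomputable def fext (f : ι →₀ B) : ℕ → B :=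
  fun m => if h : ∃ i, j i = m then f h.choose else 0

theorem fext_j (f : ι →₀ B) (i : ι) : fext j f (j i) = f i := by
  have h : ∃ i', j i' = j i := ⟨i, rfl⟩
  rw [fext, dif_pos h, j.injective h.choose_spec]

theorem fext_zero (f : ι →₀ B) {n : ℕ} (h : ∀ i ∈ f.support, j i < n) :
    ∀ m, n ≤ m → fext j f m = 0 := by
  intro m hm
  rw [fext]
  split
  · next hex =>
    rcases hex with ⟨i, hi⟩
    have h1 : ∃ i', j i' = m := ⟨i, hi⟩
    rw [j.injective (h1.choose_spec.trans hi.symm)]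
    by_contra hne
    exact absurd (hi ▸ h i (Finsupp.mem_support_iff.mpr hne)) (not_lt.mpr hm)
  · rfl

/-- Bound for the support of `f` through `j`. -/
noncomputable def Nf (f : ι →₀ B) : ℕ := (f.support.sup fun i => j i) + 1

theorem lt_Nf (f : ι →₀ B) : ∀ i ∈ f.support, j i < Nf j f :=
  fun i hi => Nat.lt_succ_of_le (Finset.le_sup (f := fun i => j i) hi)

end NoField

variable {k : Type u} [Field k]
variable {ι : Type u} (j : ι ↪ ℕ)
variable {B C : Type u} [CommRing B] [Algebra k B] [CommRing C] [Algebra k C]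

/-- Definitional unwrapping of elements of `Ga`. -/
def gaFn (x : (Ga k ι).obj B) : ι →₀ B := x

/-- Definitional wrapping. -/
def gaEl (x : ι →₀ B) : (Ga k ι).obj B := x

theorem ga_map_apply (φ : B →ₐ[k] C) (x : (Ga k ι).obj B) (i : ι) :
    gaFn ((Ga k ι).map φ x) i = φ (gaFn x i) := rfl

@[simp] theorem gaFn_gaEl (x : ι →₀ B) : gaFn (gaEl (k := k) x) = x := rfl

theorem ga_ext {x y : (Ga k ι).obj B} (h : ∀ i, gaFn x i = gaFn y i) :
    x = y := Finsupp.ext h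

theorem gp_map (φ : B →ₐ[k] C) (n : ℕ) :
    (Ga k ι).map (mapAlgHom (R := k) φ) (gaEl (gp j B n)) = gaEl (gp j C n) := by
  apply ga_ext; intro i
  rw [ga_map_apply, gaFn_gaEl, gaFn_gaEl, gp_apply, gp_apply]
  by_cases h : j i < n <;> simp [h, mapAlgHom_apply]

theorem gp_trunc (n m : ℕ) :
    (Ga k ι).map (trunc B n) (gaEl (gp j B m)) = gaEl (gp j B (min n m)) := by
  apply ga_ext; intro i
  rw [ga_map_apply, gaFn_gaEl, gaFn_gaEl, gp_apply, gp_apply]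
  by_cases h1 : j i < m
  · by_cases h2 : j i < n <;> simp [h1, h2, lt_min_iff]
  · have : ¬ j i < min n m := fun hc => h1 (lt_of_lt_of_le hc (min_le_right n m))
    simp [h1, this]

theorem gp_ev (f : ι →₀ B) {n : ℕ} (h : ∀ i ∈ f.support, j i < n) :
    (Ga k ι).map (ev (fext j f)) (gaEl (gp j B n)) = gaEl f := by
  apply ga_ext; intro i
  rw [ga_map_apply, gaFn_gaEl, gaFn_gaEl, gp_apply]
  by_cases h1 : j i < n
  · rw [if_pos h1, ev_X, fext_j]
  · rw [if_neg h1, map_zero]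
    by_contra hne
    exact h1 (h i (Finsupp.mem_support_iff.mpr fun hz => hne (by rw [hz])))

theorem gp_incl_support (n : ℕ) (f : ι →₀ B) (hn : ∀ i ∈ f.support, j i < n) :
    (ev (k := k) (fext j f)).comp (trunc B n) = ev (fext j f) :=
  L5 (fext_zero j f hn)

theorem Nf_mapRange (φ : B →ₐ[k] C) (f : ι →₀ B) :
    Nf j (Finsupp.mapRange φ φ.map_zero f) ≤ Nf j f := by
  apply Nat.succ_le_succ
  apply Finset.sup_mono
  exact Finsupp.support_mapRange

theorem fext_mapRange (φ : B →ₐ[k] C) (f : ι →₀ B) :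
    (fun m => φ (fext j f m)) = fext j (Finsupp.mapRange φ φ.map_zero f) := by
  funext m
  rw [fext, fext]
  split
  · rw [Finsupp.mapRange_apply]
  · rw [map_zero]

end AddLiftAux

namespace AddLiftAux
open MvPolynomial

section Main
variable {k : Type u} [Field k] {V' W G : AbFunctor k} {ι : Type u}

/-- `pi` induces a morphism on polynomial extensions. -/
noncomputable def piP (pi : AbHom k W G) : AbHom k (PolyF W) (PolyF G) where
  app B _ _ := pi.app (MvPolynomial ℕ B)
  naturality f x := pi.naturality (mapAlgHom f) x

theorem piP_surj (pi : AbHom k W G)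
    (hsurj : ∀ (B : Type u) [CommRing B] [Algebra k B], Function.Surjective (pi.app B)) :
    ∀ (B : Type u) [CommRing B] [Algebra k B], Function.Surjective ((piP pi).app B) :=
  fun B _ _ => hsurj (MvPolynomial ℕ B)

/-- Difference of two set-theoretic natural transformations into a group functor. -/
def shSub {V F : AbFunctor k} (a b : SetHom k V F) : SetHom k V F where
  app B _ _ v := a.app B v - b.app B v
  naturality f x := by
    rw [map_sub, a.naturality, b.naturality]

theorem shSub_app {V F : AbFunctor k} (a b : SetHom k V F) (B : Type u) [CommRing B]
    [Algebra k B] (v : V.obj B) : (shSub a b).app B v = a.app B v - b.app B v := rfl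

/-- Truncation of a `PolyF`-valued transformation. -/
noncomputable def truncSH (n : ℕ) (σ : SetHom k V' (PolyF W)) :
    SetHom k V' (PolyF W) where
  app B _ _ v := W.map (trunc B n) (σ.app B v)
  naturality {B C} _ _ _ _ f x := by
    show W.map (mapAlgHom f) (W.map (trunc B n) (σ.app B x))
      = W.map (trunc C n) (σ.app C (V'.map f x))
    rw [map_map, L2, ← map_map]
    have := σ.naturality f x
    show W.map (trunc C n) ((PolyF W).map f (σ.app B x)) = _
    rw [this]

theorem truncSH_app (n : ℕ) (σ : SetHom k V' (PolyF W)) (B : Type u) [CommRing B]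
    [Algebra k B] (v : V'.obj B) :
    (truncSH n σ).app B v = W.map (trunc B n) (σ.app B v) := rfl

variable (j : ι ↪ ℕ) (t : SetHom k (ProdF V' (Ga k ι)) G)

theorem prodF_map_apply {F1 F2 : AbFunctor k} {B C : Type u} [CommRing B] [Algebra k B]
    [CommRing C] [Algebra k C] (φ : B →ₐ[k] C) (x : F1.obj B × F2.obj B) :
    (ProdF F1 F2).map φ x = (F1.map φ x.1, F2.map φ x.2) := rfl

/-- The universal transformation at level `n` : evaluate `t` at the generic point. -/
noncomputable def tau (n : ℕ) : SetHom k V' (PolyF G) where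
  app B _ _ v := t.app (MvPolynomial ℕ B)
    (V'.map (incl B) v, gaEl (gp j B n))
  naturality {B C} _ _ _ _ f v := by
    show G.map (mapAlgHom f) (t.app (MvPolynomial ℕ B) _) = _
    rw [t.naturality (mapAlgHom f), prodF_map_apply]
    congr 1
    refine Prod.ext ?_ ?_
    · show V'.map (mapAlgHom f) (V'.map (incl B) v) = V'.map (incl C) (V'.map f v)
      rw [map_map, L1, ← map_map]
    · exact gp_map j f n

theorem tau_app (n : ℕ) (B : Type u) [CommRing B] [Algebra k B] (v : V'.obj B) :
    (tau j t n).app B v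
      = t.app (MvPolynomial ℕ B) (V'.map (incl B) v, gaEl (gp j B n)) := rfl

theorem tau_trunc (n m : ℕ) (B : Type u) [CommRing B] [Algebra k B] (v : V'.obj B) :
    G.map (trunc B n) ((tau j t m).app B v) = (tau j t (min n m)).app B v := by
  rw [tau_app, tau_app, t.naturality (trunc B n), prodF_map_apply]
  congr 1
  refine Prod.ext ?_ ?_
  · show V'.map (trunc B n) (V'.map (incl B) v) = V'.map (incl B) v
    rw [map_map, L7]
  · exact gp_trunc j n m

end Main
end AddLiftAux

namespace AddLiftAux
open MvPolynomial

section Rec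
variable {k : Type u} [Field k] {V' W G : AbFunctor k} {ι : Type u}

/-- `σ` lifts the level-`n` universal transformation. -/
def P1 (pi : AbHom k W G) (j : ι ↪ ℕ) (t : SetHom k (ProdF V' (Ga k ι)) G)
    (σ : SetHom k V' (PolyF W)) (n : ℕ) : Prop :=
  ∀ (B : Type u) [CommRing B] [Algebra k B] (v : V'.obj B),
    pi.app (MvPolynomial ℕ B) (σ.app B v) = (tau j t n).app B v

/-- `σ` is supported in the first `n` variables. -/
def P2 (σ : SetHom k V' (PolyF W)) (n : ℕ) : Prop :=
  ∀ (B : Type u) [CommRing B] [Algebra k B] (v : V'.obj B),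
    W.map (trunc B n) (σ.app B v) = σ.app B v

variable (pi : AbHom k W G) (j : ι ↪ ℕ) (t : SetHom k (ProdF V' (Ga k ι)) G)

theorem pi_trunc (n : ℕ) (B : Type u) [CommRing B] [Algebra k B]
    (x : W.obj (MvPolynomial ℕ B)) :
    pi.app (MvPolynomial ℕ B) (W.map (trunc B n) x)
      = G.map (trunc B n) (pi.app (MvPolynomial ℕ B) x) :=
  (pi.naturality (trunc B n) x).symm

theorem rec_base (hV' : LiftQ V')
    (hsurj : ∀ (B : Type u) [CommRing B] [Algebra k B], Function.Surjective (pi.app B)) : ∃ σ : SetHom k V' (PolyF W), P1 pi j t σ 0 ∧ P2 σ 0 := by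
  obtain ⟨raw, hraw⟩ := hV' (PolyF W) (PolyF G) (piP pi) (piP_surj pi hsurj) (tau j t 0)
  refine ⟨truncSH 0 raw, ?_, ?_⟩
  · intro B _ _ v
    rw [truncSH_app, pi_trunc]
    have h := hraw B v
    have h' : pi.app (MvPolynomial ℕ B) (raw.app B v) = (tau j t 0).app B v := h
    rw [h']
    rw [tau_trunc, min_self]
  · intro B _ _ v
    rw [truncSH_app, map_map, L4 (le_refl 0)]

theorem rec_step (hV' : LiftQ V')
    (hsurj : ∀ (B : Type u) [CommRing B] [Algebra k B], Function.Surjective (pi.app B))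
    (n : ℕ) (σn : SetHom k V' (PolyF W)) (h1 : P1 pi j t σn n)
    (h2 : P2 σn n) :
    ∃ σ' : SetHom k V' (PolyF W), P1 pi j t σ' (n + 1) ∧ P2 σ' (n + 1) ∧
      ∀ (B : Type u) [CommRing B] [Algebra k B] (v : V'.obj B),
        W.map (trunc B n) (σ'.app B v) = σn.app B v := by
  obtain ⟨raw, hraw⟩ := hV' (PolyF W) (PolyF G) (piP pi) (piP_surj pi hsurj)
    (tau j t (n + 1))
  have hraw' : ∀ (B : Type u) [CommRing B] [Algebra k B] (v : V'.obj B),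
      pi.app (MvPolynomial ℕ B) (raw.app B v) = (tau j t (n + 1)).app B v :=
    fun B _ _ v => hraw B v
  have h1' : ∀ (B : Type u) [CommRing B] [Algebra k B] (v : V'.obj B),
      pi.app (MvPolynomial ℕ B) (σn.app B v) = (tau j t n).app B v := h1
  have h2' : ∀ (B : Type u) [CommRing B] [Algebra k B] (v : V'.obj B),
      W.map (trunc B n) (σn.app B v) = σn.app B v := h2
  have hmin1 : min n (n + 1) = n := min_eq_left (Nat.le_succ n)
  have hmin2 : min (n + 1) n = n := min_eq_right (Nat.le_succ n)
  refine ⟨truncSH (n + 1) (shSub raw (shSub (truncSH n raw) σn)), ?_, ?_, ?_⟩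
  · intro B _ _ v
    simp only [truncSH_app, shSub_app, map_sub, pi_trunc, hraw', h1', tau_trunc,
      hmin1, hmin2, min_self, sub_self, sub_zero]
  · intro B _ _ v
    rw [truncSH_app, map_map, L4 (le_refl (n + 1))]
  · intro B _ _ v
    rw [truncSH_app, map_map, L4 (Nat.le_succ n)]
    simp only [shSub_app, truncSH_app, map_sub, map_map, L4 (le_refl n)]
    rw [h2' B v, sub_sub_cancel]

/-- The compatible sequence of lifts. -/
noncomputable def seqL (hV' : LiftQ V')
    (hsurj : ∀ (B : Type u) [CommRing B] [Algebra k B], Function.Surjective (pi.app B)) :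
    ∀ n : ℕ, {σ : SetHom k V' (PolyF W) // P1 pi j t σ n ∧ P2 σ n}
  | 0 => ⟨(rec_base pi j t hV' hsurj).choose, (rec_base pi j t hV' hsurj).choose_spec⟩
  | n + 1 =>
    ⟨(rec_step pi j t hV' hsurj n (seqL hV' hsurj n).1 (seqL hV' hsurj n).2.1
        (seqL hV' hsurj n).2.2).choose,
      (rec_step pi j t hV' hsurj n (seqL hV' hsurj n).1 (seqL hV' hsurj n).2.1
        (seqL hV' hsurj n).2.2).choose_spec.1,
      (rec_step pi j t hV' hsurj n (seqL hV' hsurj n).1 (seqL hV' hsurj n).2.1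
        (seqL hV' hsurj n).2.2).choose_spec.2.1⟩

theorem seqL_compat (hV' : LiftQ V')
    (hsurj : ∀ (B : Type u) [CommRing B] [Algebra k B], Function.Surjective (pi.app B))
    (n : ℕ) :
    ∀ (B : Type u) [CommRing B] [Algebra k B] (v : V'.obj B),
      W.map (trunc B n) ((seqL pi j t hV' hsurj (n + 1)).1.app B v)
        = (seqL pi j t hV' hsurj n).1.app B v := by
  intro B _ _ v
  have h := (rec_step pi j t hV' hsurj n (seqL pi j t hV' hsurj n).1
    (seqL pi j t hV' hsurj n).2.1 (seqL pi j t hV' hsurj n).2.2).choose_spec.2.2 B v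
  exact h

theorem seqL_chain (hV' : LiftQ V')
    (hsurj : ∀ (B : Type u) [CommRing B] [Algebra k B], Function.Surjective (pi.app B))
    {n m : ℕ} (h : n ≤ m) :
    ∀ (B : Type u) [CommRing B] [Algebra k B] (v : V'.obj B),
      W.map (trunc B n) ((seqL pi j t hV' hsurj m).1.app B v)
        = (seqL pi j t hV' hsurj n).1.app B v := by
  induction m, h using Nat.le_induction with
  | base => exact (seqL pi j t hV' hsurj n).2.2
  | succ m hm ih =>
    intro B _ _ v
    rw [← L4 (B := B) (k := k) hm, ← map_map, seqL_compat]
    exact ih B v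

end Rec
end AddLiftAux

namespace AddLiftAux
open MvPolynomial

section LemA
variable {k : Type u} [Field k] {V' W G : AbFunctor k} {ι : Type u}
variable (pi : AbHom k W G) (j : ι ↪ ℕ) (t : SetHom k (ProdF V' (Ga k ι)) G)

theorem ga_map_eq {B C : Type u} [CommRing B] [Algebra k B] [CommRing C] [Algebra k C]
    (φ : B →ₐ[k] C) (x : (Ga k ι).obj B) :
    gaFn ((Ga k ι).map φ x) = Finsupp.mapRange φ (map_zero φ) (gaFn x) := by
  apply Finsupp.ext; intro i
  rw [ga_map_apply, Finsupp.mapRange_apply]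

theorem indep (hV' : LiftQ V')
    (hsurj : ∀ (B : Type u) [CommRing B] [Algebra k B], Function.Surjective (pi.app B))
    (B : Type u) [CommRing B] [Algebra k B] (v : V'.obj B) (f : ι →₀ B) {n m : ℕ}
    (hsupp : ∀ i ∈ f.support, j i < n) (hnm : n ≤ m) :
    W.map (ev (fext j f)) ((seqL pi j t hV' hsurj m).1.app B v)
      = W.map (ev (fext j f)) ((seqL pi j t hV' hsurj n).1.app B v) := by
  conv_rhs => rw [← seqL_chain pi j t hV' hsurj hnm B v]
  rw [map_map, gp_incl_support j n f hsupp]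

/-- Parametrized lifting: any set-valued transformation `V' × 𝔾ₐ^ι → G` lifts,
provided `V'` has the lifting property and `ι` embeds into `ℕ`. -/
theorem liftQ_prod_Ga (j : ι ↪ ℕ) (hV' : LiftQ V')
    (hsurj : ∀ (B : Type u) [CommRing B] [Algebra k B], Function.Surjective (pi.app B)) :
    ∃ s : SetHom k (ProdF V' (Ga k ι)) W,
      ∀ (B : Type u) [CommRing B] [Algebra k B] (x : (ProdF V' (Ga k ι)).obj B),
        pi.app B (s.app B x) = t.app B x := by
  refine ⟨⟨fun B _ _ x => W.map (ev (fext j (gaFn x.2))) ((seqL pi j t hV' hsurj (Nf j (gaFn x.2))).1.app B x.1), ?_⟩, ?_⟩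
  · intro B C _ _ _ _ φ x
    rw [prodF_map_apply]
    show W.map φ (W.map (ev (fext j (gaFn x.2)))
        ((seqL pi j t hV' hsurj (Nf j (gaFn x.2))).1.app B x.1))
      = W.map (ev (fext j (gaFn ((Ga k ι).map φ x.2))))
        ((seqL pi j t hV' hsurj (Nf j (gaFn ((Ga k ι).map φ x.2)))).1.app C
          (V'.map φ x.1))
    rw [ga_map_eq, map_map, ← L3, fext_mapRange, ← map_map]
    have hnat := (seqL pi j t hV' hsurj (Nf j (gaFn x.2))).1.naturality φ x.1
    have hnat' : W.map (mapAlgHom (R := k) φ)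
        ((seqL pi j t hV' hsurj (Nf j (gaFn x.2))).1.app B x.1)
      = (seqL pi j t hV' hsurj (Nf j (gaFn x.2))).1.app C (V'.map φ x.1) := hnat
    rw [hnat']
    exact indep pi j t hV' hsurj C (V'.map φ x.1) _
      (lt_Nf j _) (Nf_mapRange j φ (gaFn x.2))
  · intro B _ _ x
    show pi.app B (W.map (ev (fext j (gaFn x.2)))
      ((seqL pi j t hV' hsurj (Nf j (gaFn x.2))).1.app B x.1)) = t.app B x
    rw [← pi.naturality]
    have h1 := (seqL pi j t hV' hsurj (Nf j (gaFn x.2))).2.1 B x.1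
    rw [h1, tau_app, t.naturality (ev (fext j (gaFn x.2))), prodF_map_apply]
    have hx1 : V'.map (ev (fext j (gaFn x.2))) (V'.map (incl B) x.1) = x.1 := by
      rw [map_map, L6, map_id_apply]
    have hx2 : (Ga k ι).map (ev (fext j (gaFn x.2)))
        (gaEl (gp j B (Nf j (gaFn x.2)))) = x.2 :=
      gp_ev j (gaFn x.2) (lt_Nf j (gaFn x.2))
    rw [Prod.fst, Prod.snd] at *
    exact congrArg (t.app B) (Prod.ext hx1 hx2)

end LemA
end AddLiftAux

namespace AddLiftAux
open MvPolynomial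

variable {k : Type u} [Field k]

theorem algHom_from_base_unique {C : Type u} [CommRing C] [Algebra k C]
    (g : k →ₐ[k] C) : g = Algebra.ofId k C := by
  apply AlgHom.ext
  intro x
  have h := g.commutes x
  rw [Algebra.algebraMap_self_apply] at h
  rw [h, Algebra.ofId_apply]

theorem liftQ_zeroF : LiftQ (ZeroF (k := k)) := by
  intro W G pi hsurj t
  obtain ⟨w0, hw0⟩ := hsurj k (t.app k PUnit.unit)
  refine ⟨⟨fun B _ _ _ => W.map (Algebra.ofId k B) w0, ?_⟩, ?_⟩
  · intro B C _ _ _ _ f x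
    rw [map_map, algHom_from_base_unique (f.comp (Algebra.ofId k B))]
  · intro B _ _ x
    rw [← pi.naturality, hw0, t.naturality (Algebra.ofId k B)]

theorem liftQ_Ga {ι : Type u} (j : ι ↪ ℕ) : LiftQ (Ga k ι) := by
  intro W G pi hsurj t
  have tnat : ∀ {B C : Type u} [CommRing B] [Algebra k B] [CommRing C] [Algebra k C]
      (f : B →ₐ[k] C) (x : (ProdF (ZeroF (k := k)) (Ga k ι)).obj B),
      G.map f (t.app B x.2) = t.app C (((ProdF ZeroF (Ga k ι)).map f x).2) := by
    intro B C _ _ _ _ f x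
    rw [prodF_map_apply]
    exact t.naturality f x.2
  obtain ⟨s', hs'⟩ := liftQ_prod_Ga pi ⟨fun B _ _ x => t.app B x.2, tnat⟩ j
    liftQ_zeroF hsurj
  refine ⟨⟨fun B _ _ y => s'.app B (PUnit.unit, y), ?_⟩, ?_⟩
  · intro B C _ _ _ _ f y
    rw [s'.naturality f (PUnit.unit, y), prodF_map_apply]
  · intro B _ _ y
    exact hs' B (PUnit.unit, y)

theorem liftQ_of_iso {F F' : AbFunctor k} (e : AbIso k F F') (h : LiftQ F') :
    LiftQ F := by
  intro W G pi hsurj t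
  have tnat : ∀ {B C : Type u} [CommRing B] [Algebra k B] [CommRing C] [Algebra k C]
      (f : B →ₐ[k] C) (y : F'.obj B),
      G.map f (t.app B (e.inv.app B y)) = t.app C (e.inv.app C (F'.map f y)) := by
    intro B C _ _ _ _ f y
    rw [t.naturality f, e.inv.naturality f]
  obtain ⟨s', hs'⟩ := h W G pi hsurj ⟨fun B _ _ y => t.app B (e.inv.app B y), tnat⟩
  refine ⟨⟨fun B _ _ x => s'.app B (e.hom.app B x), ?_⟩, ?_⟩
  · intro B C _ _ _ _ f x
    rw [s'.naturality f, e.hom.naturality f]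
  · intro B _ _ x
    rw [hs' B (e.hom.app B x)]
    exact congrArg (t.app B) (e.hom_inv B x)

theorem strict_embed {F : AbFunctor k} (h : IsStrictlyAdditive k F) :
    ∃ (ι : Type u) (_ : ι ↪ ℕ), Nonempty (AbIso k F (Ga k ι)) := by
  rcases h with ⟨n, ⟨e⟩⟩ | he
  case inr => obtain ⟨e⟩ := he; exact ⟨ULift ℕ, ⟨ULift.down, ULift.down_injective⟩, ⟨e⟩⟩
  · exact ⟨ULift (Fin n), ⟨fun x => (x.down : ℕ),
      fun a b hab => ULift.down_injective (Fin.val_injective hab)⟩, ⟨e⟩⟩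


theorem liftQ_strict {F : AbFunctor k} (h : IsStrictlyAdditive k F) : LiftQ F := by
  obtain ⟨ι, j, ⟨e⟩⟩ := strict_embed h
  exact liftQ_of_iso e (liftQ_Ga j)

end AddLiftAux

namespace AddLiftAux
open MvPolynomial

variable {k : Type u} [Field k]

theorem liftQ_of_additive {V : AbFunctor k} (hV : IsAdditive k V) : LiftQ V := by
  induction hV with
  | of_strict F hF => exact liftQ_strict hF
  | of_ext i p hse hA hF'' ih =>
    rename_i F' F F''
    intro W G pi hsurj t
    obtain ⟨ι, j, ⟨e⟩⟩ := strict_embed hF''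
    have hQ'' : LiftQ F'' := liftQ_of_iso e (liftQ_Ga j)
    obtain ⟨s'', hs''⟩ := hQ'' F F'' p hse.surj
      ⟨fun B _ _ y => y, fun f y => rfl⟩
    have hs''' : ∀ (B : Type u) [CommRing B] [Algebra k B] (y : F''.obj B),
        p.app B (s''.app B y) = y := fun B _ _ y => hs'' B y
    -- the retraction onto F'
    have hker : ∀ (B : Type u) [CommRing B] [Algebra k B] (x : F.obj B),
        ∃ v : F'.obj B, i.app B v = x - s''.app B (p.app B x) := by
      intro B _ _ x
      have hz : p.app B (x - s''.app B (p.app B x)) = 0 := by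
        rw [map_sub, hs''', sub_self]
      exact (hse.exact B _).mp hz
    have hrnat : ∀ {B C : Type u} [CommRing B] [Algebra k B] [CommRing C]
        [Algebra k C] (f : B →ₐ[k] C) (x : F.obj B),
        (hker C (F.map f x)).choose = F'.map f ((hker B x).choose) := by
      intro B C _ _ _ _ f x
      apply hse.inj C
      rw [(hker C (F.map f x)).choose_spec, ← i.naturality f,
        (hker B x).choose_spec, map_sub]
      congr 1
      rw [← p.naturality f x, ← s''.naturality f]
    -- the transformation on the product
    have thatnat : ∀ {B C : Type u} [CommRing B] [Algebra k B] [CommRing C]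
        [Algebra k C] (f : B →ₐ[k] C) (z : (ProdF F' (Ga k ι)).obj B),
        G.map f (t.app B (i.app B z.1 + s''.app B (e.inv.app B z.2)))
          = t.app C (i.app C (((ProdF F' (Ga k ι)).map f z).1)
              + s''.app C (e.inv.app C (((ProdF F' (Ga k ι)).map f z).2))) := by
      intro B C _ _ _ _ f z
      rw [prodF_map_apply, t.naturality f]
      congr 1
      rw [map_add, i.naturality f, s''.naturality f, e.inv.naturality f]
    obtain ⟨sh, hsh⟩ := liftQ_prod_Ga pi
      ⟨fun B _ _ z => t.app B (i.app B z.1 + s''.app B (e.inv.app B z.2)), thatnat⟩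
      j ih hsurj
    refine ⟨⟨fun B _ _ x =>
      sh.app B ((hker B x).choose, e.hom.app B (p.app B x)), ?_⟩, ?_⟩
    · intro B C _ _ _ _ f x
      rw [sh.naturality f, prodF_map_apply]
      congr 1
      refine Prod.ext ?_ ?_
      · exact (hrnat f x).symm
      · show (Ga k ι).map f (e.hom.app B (p.app B x))
          = e.hom.app C (p.app C (F.map f x))
        rw [e.hom.naturality f, p.naturality f]
    · intro B _ _ x
      rw [hsh B ((hker B x).choose, e.hom.app B (p.app B x))]
      show t.app B (i.app B (hker B x).choose
        + s''.app B (e.inv.app B (e.hom.app B (p.app B x)))) = t.app B x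
      rw [(hker B x).choose_spec, e.hom_inv B, sub_add_cancel]

end AddLiftAux
/-- If `V` is additive and `π : W → G` is an epimorphism, then every
natural transformation of underlying set-valued functors `V → G` lifts through `π`. -/
theorem additive_lift_setHom {k : Type u} [Field k] {V W G : AbFunctor k}
    (hV : IsAdditive k V) (pi : AbHom k W G)
    (hsurj : ∀ (B : Type u) [CommRing B] [Algebra k B], Function.Surjective (pi.app B))
    (t : SetHom k V G) :
    ∃ s : SetHom k V W, ∀ (B : Type u) [CommRing B] [Algebra k B] (x : V.obj B),
      pi.app B (s.app B x) = t.app B x := by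
  exact AddLiftAux.liftQ_of_additive hV W G pi hsurj t
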